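/- Let (M_k)_{k≥1} be invertible real n×n matrices, (Ω_k)_{k≥0} real symmetric positive semi-definite n×n matrices, P_0 a real symmetric positive semi-definite n×n matrix, and define P_{k+1} = M_{k+1}(I + P_kΩ_k)⁻¹P_kM_{k+1}ᵀ. Let M_{k:0} = M_k M_{k-1}⋯M_1 (with M_{0:0} = I). Then for every k ≥ 0, in the Loewner order, P_k ≤ M_{k:0}P_0M_{k:0}ᵀ. -/

import Mathlib

open Matrix

/-- `Mres M l j` is the resolvent `M_{(l+j):l} = M_{l+j} ⋯ M_{l+1}`, so that
`M_{k:0} = Mres M 0 k` and `M_{0:0} = 1`. -/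
def Mres {n : ℕ} (M : ℕ → Matrix (Fin n) (Fin n) ℝ) (l : ℕ) :
    ℕ → Matrix (Fin n) (Fin n) ℝ
  | 0 => 1
  | j + 1 => M (l + j + 1) * Mres M l j

section aux

open scoped MatrixOrder

variable {n : ℕ} {P Q : Matrix (Fin n) (Fin n) ℝ}

lemma kf_key (hP : P.PosSemidef) (hΩ : Q.PosSemidef) :
    (1 + P * Q)⁻¹ * P = CFC.sqrt P * (1 + CFC.sqrt P * Q * CFC.sqrt P)⁻¹ * CFC.sqrt P := by
  set S := CFC.sqrt P with hS
  have hSps : S.PosSemidef := (CFC.sqrt_nonneg P).posSemidef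
  have hSS : S * S = P := CFC.sqrt_mul_sqrt_self P hP.nonneg
  have hU : (S * Q * S).PosSemidef := by
    have := hΩ.mul_mul_conjTranspose_same S
    rwa [hSps.isHermitian.eq] at this
  have hT : (1 + S * Q * S).PosDef := Matrix.PosDef.one.add_posSemidef hU
  have hTdet : IsUnit (1 + S * Q * S).det := isUnit_iff_ne_zero.2 hT.det_pos.ne'
  have hdet : IsUnit (1 + P * Q).det := by
    have h1 : (1 + P * Q).det = (1 + S * Q * S).det := by
      rw [← hSS, Matrix.mul_assoc, Matrix.det_one_add_mul_comm]
    rw [h1]; exact hTdet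
  have hmain : (1 + P * Q) * (S * (1 + S * Q * S)⁻¹ * S) = P := by
    have h2 : (1 + P * Q) * S = S * (1 + S * Q * S) := by
      rw [← hSS]; noncomm_ring
    calc (1 + P * Q) * (S * (1 + S * Q * S)⁻¹ * S)
        = ((1 + P * Q) * S) * (1 + S * Q * S)⁻¹ * S := by noncomm_ring
      _ = S * ((1 + S * Q * S) * (1 + S * Q * S)⁻¹) * S := by rw [h2]; noncomm_ring
      _ = S * S := by rw [Matrix.mul_nonsing_inv _ hTdet]; simp
      _ = P := hSS
  calc (1 + P * Q)⁻¹ * P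
      = (1 + P * Q)⁻¹ * ((1 + P * Q) * (S * (1 + S * Q * S)⁻¹ * S)) := by rw [hmain]
    _ = S * (1 + S * Q * S)⁻¹ * S := by
        rw [← Matrix.mul_assoc, Matrix.nonsing_inv_mul _ hdet, one_mul]

lemma kf_key_psd (hP : P.PosSemidef) (hΩ : Q.PosSemidef) :
    ((1 + P * Q)⁻¹ * P).PosSemidef ∧ (P - (1 + P * Q)⁻¹ * P).PosSemidef := by
  rw [kf_key hP hΩ]
  set S := CFC.sqrt P with hS
  have hSps : S.PosSemidef := (CFC.sqrt_nonneg P).posSemidef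
  have hSS : S * S = P := CFC.sqrt_mul_sqrt_self P hP.nonneg
  have hU : (S * Q * S).PosSemidef := by
    have := hΩ.mul_mul_conjTranspose_same S
    rwa [hSps.isHermitian.eq] at this
  have hT : (1 + S * Q * S).PosDef := Matrix.PosDef.one.add_posSemidef hU
  have hTdet : IsUnit (1 + S * Q * S).det := isUnit_iff_ne_zero.2 hT.det_pos.ne'
  have hTi : (1 + S * Q * S)⁻¹.PosDef := hT.inv
  constructor
  · have := hTi.posSemidef.mul_mul_conjTranspose_same S
    rwa [hSps.isHermitian.eq] at this
  · set U := S * Q * S with hUdef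
    have hUU : (U + U * U).PosSemidef := by
      have h2 : (U * U).PosSemidef := by
        have := Matrix.posSemidef_conjTranspose_mul_self U
        rwa [hU.isHermitian.eq] at this
      exact hU.add h2
    have key : S * S - S * (1 + U)⁻¹ * S
        = (S * (1 + U)⁻¹) * (U + U * U) * (S * (1 + U)⁻¹)ᴴ := by
      have hinv : (1 + U) * (1 + U)⁻¹ = 1 := Matrix.mul_nonsing_inv _ hTdet
      have hinv' : (1 + U)⁻¹ * (1 + U) = 1 := Matrix.nonsing_inv_mul _ hTdet
      have hHerm : (S * (1 + U)⁻¹)ᴴ = (1 + U)⁻¹ * S := by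
        rw [Matrix.conjTranspose_mul, hSps.isHermitian.eq, hTi.isHermitian.eq]
      rw [hHerm]
      have hmid : (1 + U)⁻¹ * (U + U * U) * (1 + U)⁻¹ = (1 + U)⁻¹ * U := by
        calc (1 + U)⁻¹ * (U + U * U) * (1 + U)⁻¹
            = (1 + U)⁻¹ * (U * (1 + U)) * (1 + U)⁻¹ := by noncomm_ring
          _ = (1 + U)⁻¹ * U * ((1 + U) * (1 + U)⁻¹) := by noncomm_ring
          _ = (1 + U)⁻¹ * U := by rw [hinv, Matrix.mul_one]
      have hsub : (1 + U)⁻¹ * U = 1 - (1 + U)⁻¹ := by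
        have h : (1 + U)⁻¹ * (1 + U) - (1 + U)⁻¹ * 1 = (1 + U)⁻¹ * U := by
          noncomm_ring
        rw [← h, hinv', Matrix.mul_one]
      calc S * S - S * (1 + U)⁻¹ * S = S * (1 - (1 + U)⁻¹) * S := by noncomm_ring
        _ = S * ((1 + U)⁻¹ * U) * S := by rw [hsub]
        _ = S * (1 + U)⁻¹ * (U + U * U) * ((1 + U)⁻¹ * S) := by
            rw [← hmid]; noncomm_ring
        _ = S * (1 + U)⁻¹ * (U + U * U) * ((1 + U)⁻¹ * S) := rfl
    rw [← hSS, key]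
    exact hUU.mul_mul_conjTranspose_same _

end aux

theorem kf_free_forecast_bound_perfect {n : ℕ}
    (M Ω : ℕ → Matrix (Fin n) (Fin n) ℝ)
    (hM : ∀ k, 1 ≤ k → IsUnit (M k)) (hΩ : ∀ k, (Ω k).PosSemidef)
    (P : ℕ → Matrix (Fin n) (Fin n) ℝ) (hP0 : (P 0).PosSemidef)
    (hrec : ∀ k, P (k + 1)
      = M (k + 1) * (1 + P k * Ω k)⁻¹ * P k * (M (k + 1))ᵀ) :
    ∀ k, (Mres M 0 k * P 0 * (Mres M 0 k)ᵀ - P k).PosSemidef := by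
  have main : ∀ k, (P k).PosSemidef ∧
      (Mres M 0 k * P 0 * (Mres M 0 k)ᵀ - P k).PosSemidef := by
    intro k
    induction k with
    | zero =>
      refine ⟨hP0, ?_⟩
      simp [Mres]
      exact Matrix.PosSemidef.zero
    | succ k ih =>
      obtain ⟨hPk, hdiff⟩ := ih
      obtain ⟨hX, hPX⟩ := kf_key_psd hPk (hΩ k)
      set A := M (k + 1) with hA
      set X := (1 + P k * Ω k)⁻¹ * P k with hX'
      have hstep : P (k + 1) = A * X * Aᵀ := by
        simp only [hrec, hX', hA, Matrix.mul_assoc]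
      have hMres : Mres M 0 (k + 1) = A * Mres M 0 k := by
        show M (0 + k + 1) * Mres M 0 k = A * Mres M 0 k
        rw [Nat.zero_add]
      constructor
      · rw [hstep]
        have := hX.mul_mul_conjTranspose_same A
        rwa [Matrix.conjTranspose_eq_transpose_of_trivial] at this
      · have heq : Mres M 0 (k + 1) * P 0 * (Mres M 0 (k + 1))ᵀ - P (k + 1)
            = A * ((Mres M 0 k * P 0 * (Mres M 0 k)ᵀ - P k) + (P k - X)) * Aᵀ := by
          rw [hMres, hstep, Matrix.transpose_mul]
          noncomm_ring
        rw [heq]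
        have hsum := hdiff.add hPX
        have := hsum.mul_mul_conjTranspose_same A
        rwa [Matrix.conjTranspose_eq_transpose_of_trivial] at this
  exact fun k => (main k).2
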